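/- Let b > 0, L ≥ b, and U = L + b·e·(e−1) arbitrary with τ* satisfying L ≤ τ* < L + b. Then (bτ*/L)·(1 − ln((L + be(e−1))/(L + b(e−1)))) ≥ b·(2 − ln(e² − e + 1)), with the minimum over L attained at L = b. -/
import Mathlib


open Real

theorem stmt_13 (b L U τ : ℝ) (hb : 0 < b) (hL : b ≤ L)
    (hU : U = L + b * exp 1 * (exp 1 - 1))
    (hτ1 : L ≤ τ) (hτ2 : τ < L + b) :
    (b * τ / L) *
        (1 - Real.log ((L + b * exp 1 * (exp 1 - 1)) / (L + b * (exp 1 - 1))))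
      ≥ b * (2 - Real.log (exp 1 ^ 2 - exp 1 + 1)) := by
  have he : (1:ℝ) < exp 1 := by
    have := Real.exp_one_gt_d9; linarith
  have hc0 : 0 < exp 1 - 1 := by linarith
  have hL0 : 0 < L := lt_of_lt_of_le hb hL
  have hden : 0 < L + b * (exp 1 - 1) := by positivity
  have hnum : 0 < L + b * exp 1 * (exp 1 - 1) := by positivity
  have hpos2 : 0 < exp 1 ^ 2 - exp 1 + 1 := by nlinarith
  have key : (L + b * exp 1 * (exp 1 - 1)) / (L + b * (exp 1 - 1))
      ≤ (exp 1 ^ 2 - exp 1 + 1) / exp 1 := by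
    rw [div_le_div_iff₀ hden (exp_pos 1)]
    nlinarith [mul_nonneg (sub_nonneg.2 hL) (sq_nonneg (exp 1 - 1))]
  have hlog : Real.log ((L + b * exp 1 * (exp 1 - 1)) / (L + b * (exp 1 - 1)))
      ≤ Real.log (exp 1 ^ 2 - exp 1 + 1) - 1 := by
    have h := Real.log_le_log (by positivity) key
    rwa [Real.log_div (ne_of_gt hpos2) (exp_ne_zero 1), Real.log_exp] at h
  have hF : (2 - Real.log (exp 1 ^ 2 - exp 1 + 1))
      ≤ 1 - Real.log ((L + b * exp 1 * (exp 1 - 1)) / (L + b * (exp 1 - 1))) := by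
    linarith
  have hF0 : 0 < 2 - Real.log (exp 1 ^ 2 - exp 1 + 1) := by
    have h1 : Real.log (exp 1 ^ 2 - exp 1 + 1) < Real.log (exp 1 ^ 2) := by
      apply Real.log_lt_log hpos2
      nlinarith
    have h2 : Real.log (exp 1 ^ 2) = 2 := by
      rw [show (exp 1)^2 = exp 2 by rw [← Real.exp_nat_mul]; norm_num]
      exact Real.log_exp 2
    linarith
  have hbτ : b ≤ b * τ / L := by
    rw [le_div_iff₀ hL0]
    nlinarith
  calc b * (2 - Real.log (exp 1 ^ 2 - exp 1 + 1))
      ≤ b * (1 - Real.log ((L + b * exp 1 * (exp 1 - 1)) / (L + b * (exp 1 - 1)))) :=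
        mul_le_mul_of_nonneg_left hF hb.le
    _ ≤ (b * τ / L) * (1 - Real.log ((L + b * exp 1 * (exp 1 - 1)) / (L + b * (exp 1 - 1)))) :=
        mul_le_mul_of_nonneg_right hbτ (by linarith)
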